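/- Let R be a commutative reduced Noetherian ring, R̃ its integral closure in the total quotient ring Frac(R), and I a radical ideal of R containing a nonzerodivisor such that every prime 𝔭 with R_𝔭 not normal contains I. If {h ∈ Frac(R) : h·I ⊆ I} = R, then R = R̃ (R is integrally closed in Frac(R)). -/

import Mathlib

section Aux

variable {R : Type*} [CommRing R]

/-- Nonzerodivisors map to nonzerodivisors in any localization. -/
lemma aux_nzd_map (M : Submonoid R) (L : Type*) [CommRing L] [Algebra R L]
    [IsLocalization M L] {f : R} (hf : f ∈ nonZeroDivisors R) :
    algebraMap R L f ∈ nonZeroDivisors L := by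
  rw [mem_nonZeroDivisors_iff_right]
  intro z hz
  obtain ⟨⟨a, s⟩, rfl⟩ := IsLocalization.mk'_surjective M z
  dsimp only at hz ⊢
  rw [IsLocalization.mk'_eq_zero_iff]
  rw [mul_comm, IsLocalization.mul_mk'_eq_mk'_of_mul, IsLocalization.mk'_eq_zero_iff] at hz
  obtain ⟨m, hm⟩ := hz
  exact ⟨m, mem_nonZeroDivisors_iff_right.mp hf _ (by rw [mul_comm f a, ← mul_assoc] at hm; exact hm)⟩

end Aux

section Step

variable {R : Type*} [CommRing R]

lemma aux_step (I : Ideal R) (hrad : I.IsRadical)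
    (heq : {h : FractionRing R |
        ∀ a ∈ I, ∃ b ∈ I, h * algebraMap R (FractionRing R) a
          = algebraMap R (FractionRing R) b}
      = Set.range (algebraMap R (FractionRing R)))
    (x : FractionRing R) (hint : IsIntegral R x)
    (hI : ∀ a ∈ I, ∃ r : R, x * algebraMap R (FractionRing R) a
      = algebraMap R (FractionRing R) r) :
    x ∈ Set.range (algebraMap R (FractionRing R)) := by
  rw [← heq]
  intro a ha
  obtain ⟨r, hr⟩ := hI a ha
  refine ⟨r, ?_, hr⟩
  obtain ⟨p, pmonic, hp⟩ := hint
  have hp' : Polynomial.aeval x p = 0 := hp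
  set n := p.natDegree with hn
  have key : (∑ i ∈ Finset.range (n + 1), p.coeff i * a ^ (n - i) * r ^ i) = 0 := by
    apply IsFractionRing.injective R (FractionRing R)
    rw [map_zero, map_sum]
    have step : ∀ i ∈ Finset.range (n + 1),
        algebraMap R (FractionRing R) (p.coeff i * a ^ (n - i) * r ^ i)
          = (algebraMap R (FractionRing R) a) ^ n * (p.coeff i • x ^ i) := by
      intro i hi
      rw [Finset.mem_range, Nat.lt_succ_iff] at hi
      rw [map_mul, map_mul, map_pow, map_pow, ← hr, Algebra.smul_def, mul_pow]
      rw [show (algebraMap R (FractionRing R) a) ^ n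
          = (algebraMap R (FractionRing R) a) ^ (n - i)
            * (algebraMap R (FractionRing R) a) ^ i by
        rw [← pow_add, Nat.sub_add_cancel hi]]
      ring
    rw [Finset.sum_congr rfl step, ← Finset.mul_sum, ← Polynomial.aeval_eq_sum_range, hp',
      mul_zero]
  rw [Finset.sum_range_succ, pmonic.coeff_natDegree, Nat.sub_self, pow_zero, one_mul,
    one_mul] at key
  have key2 := eq_neg_of_add_eq_zero_right key
  have hsplit : r ^ n ∈ I := by
    rw [key2]
    refine neg_mem (Ideal.sum_mem _ fun i hi => ?_)
    rw [Finset.mem_range] at hi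
    have hI2 : a ^ (n - i) ∈ I := by
      have : a ^ (n - i) = a * a ^ (n - i - 1) := by
        rw [← pow_succ']
        congr 1
        omega
      rw [this]
      exact I.mul_mem_right _ ha
    exact I.mul_mem_right _ (I.mul_mem_left _ hI2)
  exact hrad ⟨n, hsplit⟩

end Step

section Ind

variable {R : Type*} [CommRing R]

lemma aux_ind (I : Ideal R) (hrad : I.IsRadical)
    (heq : {h : FractionRing R |
        ∀ a ∈ I, ∃ b ∈ I, h * algebraMap R (FractionRing R) a
          = algebraMap R (FractionRing R) b}
      = Set.range (algebraMap R (FractionRing R)))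
    (n : ℕ) :
    ∀ x : FractionRing R, IsIntegral R x →
      (∀ a ∈ I ^ n, ∃ r : R, x * algebraMap R (FractionRing R) a
        = algebraMap R (FractionRing R) r) →
      x ∈ Set.range (algebraMap R (FractionRing R)) := by
  induction n with
  | zero =>
    intro x _ hI
    obtain ⟨r, hr⟩ := hI 1 (by simp)
    exact ⟨r, by simpa using hr.symm⟩
  | succ n ih =>
    intro x hint hI
    apply aux_step I hrad heq x hint
    intro a ha
    have hxa : IsIntegral R (x * algebraMap R (FractionRing R) a) :=
      hint.mul (isIntegral_algebraMap)
    have hmem : x * algebraMap R (FractionRing R) a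
        ∈ Set.range (algebraMap R (FractionRing R)) := by
      apply ih _ hxa
      intro b hb
      obtain ⟨r, hr⟩ := hI (a * b) (by
        rw [pow_succ']
        exact Ideal.mul_mem_mul ha hb)
      exact ⟨r, by rw [mul_assoc, ← map_mul]; exact hr⟩
    obtain ⟨r, hr⟩ := hmem
    exact ⟨r, hr.symm⟩

end Ind

section Local

variable {R : Type*} [CommRing R]

lemma aux_local (𝔭 : Ideal R) [𝔭.IsPrime]
    (hnormal : ∀ x : FractionRing (Localization.AtPrime 𝔭),
        IsIntegral (Localization.AtPrime 𝔭) x →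
          x ∈ Set.range (algebraMap (Localization.AtPrime 𝔭)
            (FractionRing (Localization.AtPrime 𝔭))))
    (h : FractionRing R) (hint : IsIntegral R h) :
    ∃ s ∉ 𝔭, ∃ y : R, h * algebraMap R (FractionRing R) s
      = algebraMap R (FractionRing R) y := by
  set g : R →+* FractionRing (Localization.AtPrime 𝔭) :=
    (algebraMap (Localization.AtPrime 𝔭) (FractionRing (Localization.AtPrime 𝔭))).comp
      (algebraMap R (Localization.AtPrime 𝔭)) with hgdef
  have hg : ∀ s : nonZeroDivisors R, IsUnit (g s) := fun s =>
    IsLocalization.map_units (FractionRing (Localization.AtPrime 𝔭))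
      ⟨algebraMap R (Localization.AtPrime 𝔭) s, aux_nzd_map 𝔭.primeCompl _ s.2⟩
  set φ : FractionRing R →+* FractionRing (Localization.AtPrime 𝔭) :=
    IsLocalization.lift (M := nonZeroDivisors R) (S := FractionRing R) hg with hφdef
  have φcomp : ∀ r : R, φ (algebraMap R (FractionRing R) r) = g r := fun r =>
    IsLocalization.lift_eq hg r
  -- φ h is integral over L
  have hφint : IsIntegral (Localization.AtPrime 𝔭) (φ h) := by
    obtain ⟨p, pmonic, hp⟩ := hint
    refine ⟨p.map (algebraMap R (Localization.AtPrime 𝔭)), pmonic.map _, ?_⟩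
    rw [Polynomial.eval₂_map]
    have hcomp : g = φ.comp (algebraMap R (FractionRing R)) :=
      RingHom.ext fun r => (φcomp r).symm
    rw [← hgdef, hcomp, ← Polynomial.hom_eval₂, hp, map_zero]
  obtain ⟨y, hy⟩ := hnormal (φ h) hφint
  obtain ⟨⟨xx, s⟩, hmk⟩ := IsLocalization.mk'_surjective 𝔭.primeCompl y
  dsimp only at hmk
  -- g s * φ h = g xx
  have hkey : φ (algebraMap R (FractionRing R) s * h
      - algebraMap R (FractionRing R) xx) = 0 := by
    have hspec := IsLocalization.mk'_spec (Localization.AtPrime 𝔭) xx s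
    rw [hmk] at hspec
    have h2 := congrArg (algebraMap (Localization.AtPrime 𝔭)
      (FractionRing (Localization.AtPrime 𝔭))) hspec
    rw [map_mul, hy] at h2
    rw [map_sub, map_mul, φcomp, φcomp, hgdef]
    simp only [RingHom.comp_apply]
    rw [mul_comm] at h2
    rw [h2, sub_self]
  -- kernel argument
  obtain ⟨⟨a, b⟩, hab⟩ := IsLocalization.mk'_surjective (nonZeroDivisors R)
    (algebraMap R (FractionRing R) s * h - algebraMap R (FractionRing R) xx)
  dsimp only at hab
  rw [← hab] at hkey
  have hga : g a = 0 := by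
    have hspec := IsLocalization.mk'_spec (FractionRing R) a b
    have h2 := congrArg φ hspec
    rw [map_mul, hkey, zero_mul, φcomp] at h2
    exact h2.symm
  have haL : algebraMap R (Localization.AtPrime 𝔭) a = 0 := by
    apply IsFractionRing.injective (Localization.AtPrime 𝔭)
      (FractionRing (Localization.AtPrime 𝔭))
    rw [map_zero]
    exact hga
  obtain ⟨t, ht⟩ := (IsLocalization.map_eq_zero_iff 𝔭.primeCompl
    (Localization.AtPrime 𝔭) a).mp haL
  -- t * (sh - xx) = 0 in K
  have htz : algebraMap R (FractionRing R) t * (algebraMap R (FractionRing R) s * h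
      - algebraMap R (FractionRing R) xx) = 0 := by
    rw [← hab, IsLocalization.mul_mk'_eq_mk'_of_mul, ht, IsLocalization.mk'_zero]
  refine ⟨t * s, fun hmem => ?_, t * xx, ?_⟩
  · exact (Submonoid.mul_mem _ t.2 s.2 : (t : R) * (s : R) ∈ 𝔭.primeCompl) hmem
  · have h3 := sub_eq_zero.mp (by rw [mul_sub] at htz; exact htz)
    rw [map_mul, map_mul]
    calc h * (algebraMap R (FractionRing R) t * algebraMap R (FractionRing R) s)
        = algebraMap R (FractionRing R) t * (algebraMap R (FractionRing R) s * h) := by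
          ring
      _ = algebraMap R (FractionRing R) t * algebraMap R (FractionRing R) xx := h3

end Local

/-- Grauert–Remmert normality criterion: let `I` be a radical ideal containing a
nonzerodivisor such that every prime `𝔭` with `R_𝔭` not normal contains `I`.
If `{h ∈ Frac(R) : h·I ⊆ I} = R`, then `R` is integrally closed in `Frac(R)`. -/
theorem stmt_14 (R : Type*) [CommRing R] [IsNoetherianRing R] [IsReduced R]
    (I : Ideal R) (hrad : I.IsRadical) (hnzd : ∃ f ∈ I, f ∈ nonZeroDivisors R)
    (hNNL : ∀ (𝔭 : Ideal R) [𝔭.IsPrime],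
      ¬ (∀ x : FractionRing (Localization.AtPrime 𝔭),
          IsIntegral (Localization.AtPrime 𝔭) x →
            x ∈ Set.range (algebraMap (Localization.AtPrime 𝔭)
              (FractionRing (Localization.AtPrime 𝔭)))) → I ≤ 𝔭)
    (heq : {h : FractionRing R |
        ∀ a ∈ I, ∃ b ∈ I, h * algebraMap R (FractionRing R) a
          = algebraMap R (FractionRing R) b}
      = Set.range (algebraMap R (FractionRing R))) :
    ∀ h : FractionRing R, IsIntegral R h →
      h ∈ Set.range (algebraMap R (FractionRing R)) := by
  intro h hint
  -- the "ideal of denominators" of h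
  set 𝔞 : Ideal R :=
    { carrier := {r : R | ∃ y : R, h * algebraMap R (FractionRing R) r
        = algebraMap R (FractionRing R) y}
      zero_mem' := ⟨0, by simp⟩
      add_mem' := by
        rintro r₁ r₂ ⟨y₁, hy₁⟩ ⟨y₂, hy₂⟩
        exact ⟨y₁ + y₂, by rw [map_add, map_add, mul_add, hy₁, hy₂]⟩
      smul_mem' := by
        rintro c r ⟨y, hy⟩
        refine ⟨c * y, ?_⟩
        rw [smul_eq_mul, map_mul, map_mul, ← mul_assoc,
          mul_comm h (algebraMap R (FractionRing R) c), mul_assoc, hy]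
    } with h𝔞
  -- every prime over 𝔞 contains I
  have hIrad : I ≤ 𝔞.radical := by
    intro f hf
    rw [Ideal.radical_eq_sInf, Ideal.mem_sInf]
    rintro 𝔭 ⟨h𝔞𝔭, hprime⟩
    haveI := hprime
    by_contra hf𝔭
    have hnotle : ¬ I ≤ 𝔭 := fun hle => hf𝔭 (hle hf)
    have hnormal : ∀ x : FractionRing (Localization.AtPrime 𝔭),
        IsIntegral (Localization.AtPrime 𝔭) x →
          x ∈ Set.range (algebraMap (Localization.AtPrime 𝔭)
            (FractionRing (Localization.AtPrime 𝔭))) := by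
      by_contra hn
      exact hnotle (hNNL 𝔭 hn)
    obtain ⟨s, hs𝔭, y, hy⟩ := aux_local 𝔭 hnormal h hint
    exact hs𝔭 (h𝔞𝔭 ⟨y, hy⟩)
  obtain ⟨k, hk⟩ := Ideal.exists_pow_le_of_le_radical_of_fg hIrad
    (IsNoetherian.noetherian I)
  exact aux_ind I hrad heq k h hint fun a ha => hk ha
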